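/- Let A, A* be a spin Leonard pair on V with a balanced Boltzmann pair W, W*. Let {E_i}_{i=0}^d be a standard ordering of the primitive idempotents of A, set E*_i = (W W* W)^{-1} E_i (W W* W) for 0 ≤ i ≤ d, and let Φ = (A; {E_i}_{i=0}^d; A*; {E*_i}_{i=0}^d) be the resulting Leonard system on V. Let f, τ_0, …, τ_d be the nonzero scalars with τ_0 = 1 and W = f Σ_{i=0}^d τ_i E_i, and set γ = f^{-1} tr(W* E_0). Then γ = ν^{-1} Σ_{i=0}^d k_i τ_i. -/

import Mathlib

noncomputable section

open Finset

variable {F V : Type*} [Field F] [AddCommGroup V] [Module F V]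

/-- A matrix is irreducible tridiagonal: each nonzero entry lies on the diagonal,
subdiagonal or superdiagonal, and every subdiagonal and superdiagonal entry is nonzero. -/
def IsIrredTridiag {n : ℕ} {F : Type*} [Field F] (M : Matrix (Fin n) (Fin n) F) : Prop :=
  (∀ i j : Fin n, ((i : ℕ) + 1 < (j : ℕ) ∨ (j : ℕ) + 1 < (i : ℕ)) → M i j = 0) ∧
  (∀ i j : Fin n, ((i : ℕ) + 1 = (j : ℕ) ∨ (j : ℕ) + 1 = (i : ℕ)) → M i j ≠ 0)

/-- A Leonard pair on `V` (of dimension `d+1`): there is a basis in which `A` is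
irreducible tridiagonal and `A*` diagonal, and a basis in which `A*` is irreducible
tridiagonal and `A` diagonal. -/
def IsLeonardPair (d : ℕ) (A Astar : Module.End F V) : Prop :=
  (∃ b : Module.Basis (Fin (d + 1)) F V,
    IsIrredTridiag (LinearMap.toMatrix b b A) ∧ (LinearMap.toMatrix b b Astar).IsDiag) ∧
  (∃ b : Module.Basis (Fin (d + 1)) F V,
    IsIrredTridiag (LinearMap.toMatrix b b Astar) ∧ (LinearMap.toMatrix b b A).IsDiag)

/-- A Boltzmann pair for the Leonard pair `A, A*` : invertible `W ∈ ⟨A⟩`,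
`W* ∈ ⟨A*⟩` with `W A* W⁻¹ = (W*)⁻¹ A W*`. -/
def IsBoltzmannPair (A Astar W Wstar : Module.End F V) : Prop :=
  W ∈ Algebra.adjoin F {A} ∧ Wstar ∈ Algebra.adjoin F {Astar} ∧
  IsUnit W ∧ IsUnit Wstar ∧
  W * Astar * Ring.inverse W = Ring.inverse Wstar * A * Wstar

/-- `E` is an ordering of the primitive idempotents of the multiplicity-free map `B`. -/
def IsIdemOrdering (d : ℕ) (B : Module.End F V) (E : Fin (d + 1) → Module.End F V) : Prop :=
  (∀ i, E i ≠ 0) ∧ (∀ i j, E i * E j = if i = j then E i else 0) ∧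
  (∑ i, E i = 1) ∧ ∃ θ : Fin (d + 1) → F, Function.Injective θ ∧ B = ∑ i, θ i • E i

/-- `E` is a standard ordering of the primitive idempotents of `B` (relative to `C`):
choosing nonzero `vᵢ ∈ Eᵢ V`, the matrix of `C` in the basis `vᵢ` is irreducible
tridiagonal (and the matrix of `B` is diagonal). -/
def IsStandardOrdering (d : ℕ) (B C : Module.End F V)
    (E : Fin (d + 1) → Module.End F V) : Prop :=
  IsIdemOrdering d B E ∧
  ∃ b : Module.Basis (Fin (d + 1)) F V, (∀ i, E i (b i) = b i) ∧
    IsIrredTridiag (LinearMap.toMatrix b b C) ∧ (LinearMap.toMatrix b b B).IsDiag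

/-- A Leonard system on `V`. -/
def IsLeonardSystem (d : ℕ) (A Astar : Module.End F V)
    (E Estar : Fin (d + 1) → Module.End F V) : Prop :=
  IsLeonardPair d A Astar ∧ IsStandardOrdering d A Astar E ∧ IsStandardOrdering d Astar A Estar

/-- with `γ = f⁻¹ tr(W* E₀)` and `kᵢ = ν tr(E*ᵢ E₀)`,
one has `γ = ν⁻¹ Σᵢ kᵢ τᵢ`. -/
theorem gamma_eq_sum_ki_tau {F V : Type*} [Field F] [AddCommGroup V] [Module F V]
    (d : ℕ) (A Astar W Wstar : Module.End F V)
    (hLP : IsLeonardPair d A Astar)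
    (hB : IsBoltzmannPair A Astar W Wstar)
    (hbal : W * Wstar * W = Wstar * W * Wstar)
    (E Estar : Fin (d + 1) → Module.End F V)
    (hEstar : ∀ i, Estar i = Ring.inverse (W * Wstar * W) * E i * (W * Wstar * W))
    (hLS : IsLeonardSystem d A Astar E Estar)
    (ν : F) (hν0 : ν ≠ 0)
    (hν1 : ν • (E 0 * Estar 0 * E 0) = E 0)
    (hν2 : ν • (Estar 0 * E 0 * Estar 0) = Estar 0)
    (k : Fin (d + 1) → F)
    (hk : ∀ i, k i = ν * LinearMap.trace F V (Estar i * E 0))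
    (f : F) (τ : Fin (d + 1) → F)
    (hf : f ≠ 0) (hτ : ∀ i, τ i ≠ 0) (hτ0 : τ 0 = 1)
    (hW : W = f • ∑ i, τ i • E i)
    (γ : F) (hγ : γ = f⁻¹ * LinearMap.trace F V (Wstar * E 0)) :
    γ = ν⁻¹ * ∑ i, k i * τ i := by
  obtain ⟨_, _, hWu, hWsu, _⟩ := hB
  set X := W * Wstar * W with hX
  have hXu : IsUnit X := (hWu.mul hWsu).mul hWu
  have hXcomm : W * X = X * Wstar := by
    conv_lhs => rw [hbal]
    rw [hX]
    simp [mul_assoc]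
  have hkey : Ring.inverse X * (W * X) = Wstar := by
    rw [hXcomm, ← mul_assoc, Ring.inverse_mul_cancel _ hXu, one_mul]
  have hS : (∑ i, τ i • E i) = f⁻¹ • W := by
    rw [hW, smul_smul, inv_mul_cancel₀ hf, one_smul]
  have hsum : (∑ i, τ i • (Estar i * E 0)) = f⁻¹ • (Wstar * E 0) := by
    have h1 : ∀ i, τ i • (Estar i * E 0)
        = Ring.inverse X * ((τ i • E i) * (X * E 0)) := by
      intro i
      rw [hEstar i]
      simp only [← hX, smul_mul_assoc, mul_smul_comm, mul_assoc]
    calc (∑ i, τ i • (Estar i * E 0))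
        = ∑ i, Ring.inverse X * ((τ i • E i) * (X * E 0)) := by
          exact Finset.sum_congr rfl fun i _ => h1 i
      _ = Ring.inverse X * ((∑ i, τ i • E i) * (X * E 0)) := by
          rw [← Finset.mul_sum, ← Finset.sum_mul]
      _ = f⁻¹ • (Ring.inverse X * (W * X) * E 0) := by
          rw [hS]
          simp only [smul_mul_assoc, mul_smul_comm, mul_assoc]
      _ = f⁻¹ • (Wstar * E 0) := by rw [hkey]
  have htr : (∑ i, τ i * LinearMap.trace F V (Estar i * E 0))
      = f⁻¹ * LinearMap.trace F V (Wstar * E 0) := by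
    have := congrArg (LinearMap.trace F V) hsum
    simpa [map_sum] using this
  rw [hγ, ← htr]
  have hk' : (∑ i, k i * τ i) = ν * ∑ i, τ i * LinearMap.trace F V (Estar i * E 0) := by
    rw [Finset.mul_sum]
    refine Finset.sum_congr rfl fun i _ => ?_
    rw [hk i]; ring
  rw [hk', ← mul_assoc, inv_mul_cancel₀ hν0, one_mul]
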